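/- arXiv:1805.09729 — 3 statements merged into one kernel-verified Lean document; each statement's English description precedes it below -/
import Mathlib

section
/- If λ is an additive character of Z/nZ of order n (i.e., λ(x) = exp(2πi a x / n) with gcd(a,n) = 1) and χ is a multiplicative character of (Z/nZ)*, then the Gauss sum G(GL_r(Z/nZ), χ, λ) = ∑_{X ∈ GL_r(Z/nZ)} χ(det X) λ(tr X) equals G(Z/nZ, χ, λ)^r · n^{r(r-1)/2}, where G(Z/nZ, χ, λ) = ∑_{x ∈ (Z/nZ)*} χ(x) λ(x). -/
open scoped BigOperators

/-- The additive character `x ↦ exp(2πi a x / n)` of `ℤ/nℤ`, evaluated on the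
natural representative `v` of a residue class. -/
noncomputable def addChar (n : ℕ) (a : ℤ) (v : ℕ) : ℂ :=
  Complex.exp (2 * Real.pi * Complex.I * a * v / n)

namespace GaussGLAux

open Matrix Finset

variable (n : ℕ) [NeZero n] (a : ℤ)

noncomputable def zet : ℂ := Complex.exp (2 * Real.pi * Complex.I * a / n)

lemma hn0 : (n : ℂ) ≠ 0 := Nat.cast_ne_zero.mpr (NeZero.ne n)

lemma zet_pow : zet n a ^ n = 1 := by
  rw [zet, ← Complex.exp_nat_mul]
  have h : (n : ℂ) * (2 * Real.pi * Complex.I * a / n) = a * (2 * Real.pi * Complex.I) := by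
    field_simp [hn0 n]
  rw [h, Complex.exp_int_mul_two_pi_mul_I]

lemma zet_primitive (ha : Int.gcd a n = 1) : IsPrimitiveRoot (zet n a) n := by
  set b : ℕ := (a % n).natAbs with hb
  have hnn : (0 : ℤ) < n := Int.natCast_pos.mpr (Nat.pos_of_ne_zero (NeZero.ne n))
  have hbz : (b : ℤ) = a % n := Int.natAbs_of_nonneg (Int.emod_nonneg a hnn.ne')
  have h1 : IsCoprime (a : ℤ) n := Int.isCoprime_iff_gcd_eq_one.mpr ha
  have h2 : IsCoprime ((a % n : ℤ)) (n : ℤ) := by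
    rw [Int.emod_def, sub_eq_add_neg]
    simpa [mul_neg] using h1.add_mul_left_left (-(a / n))
  have hbco : Nat.Coprime b n := by
    have := Int.isCoprime_iff_gcd_eq_one.mp h2
    rwa [Int.gcd_def, Int.natAbs_natCast] at this
  have haz : (a : ℂ) = (b : ℂ) + (n : ℂ) * ((a / n : ℤ) : ℂ) := by
    have h3 : (a : ℤ) = (b : ℤ) + (n : ℤ) * (a / n) := by
      rw [hbz]; exact (Int.emod_add_mul_ediv a n).symm
    exact_mod_cast congrArg (fun z : ℤ => (z : ℂ)) h3
  have key : zet n a = Complex.exp (2 * Real.pi * Complex.I * ((b : ℂ) / n)) := by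
    rw [zet, Complex.exp_eq_exp_iff_exists_int]
    refine ⟨a / n, ?_⟩
    field_simp [hn0 n]
    linear_combination haz
  rw [key]
  exact Complex.isPrimitiveRoot_exp_of_coprime b n (NeZero.ne n) hbco

noncomputable def psi : AddChar (ZMod n) ℂ := AddChar.zmodChar n (zet_pow n a)

lemma psi_apply (x : ZMod n) : psi n a x = addChar n a x.val := by
  rw [psi, AddChar.zmodChar_apply, zet, ← Complex.exp_nat_mul, addChar]
  congr 1
  ring

lemma psi_primitive (ha : Int.gcd a n = 1) : AddChar.IsPrimitive (psi n a) :=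
  AddChar.zmodChar_primitive_of_primitive_root n (zet_primitive n a ha)

lemma sum_psi_mul (ha : Int.gcd a n = 1) (c : ZMod n) :
    ∑ t : ZMod n, psi n a (t * c) = if c = 0 then (n : ℂ) else 0 := by
  rw [AddChar.sum_mulShift c (psi_primitive n a ha), ZMod.card]
  split_ifs <;> simp

lemma addchar_map_sum {A M : Type*} [AddCommMonoid A] [CommMonoid M] (ψ : AddChar A M)
    {ι : Type*} (s : Finset ι) (f : ι → A) :
    ψ (∑ i ∈ s, f i) = ∏ i ∈ s, ψ (f i) := by
  induction s using Finset.cons_induction with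
  | empty => rw [Finset.sum_empty, Finset.prod_empty, AddChar.map_zero_eq_one]
  | cons i s hi ih => rw [Finset.sum_cons, Finset.prod_cons, AddChar.map_add_eq_mul, ih]

/-- sum over units equals sum over the monoid, when `f` vanishes off units. -/
lemma sum_units_eq {M : Type*} [Monoid M] [Fintype M] [DecidableEq M] (f : M → ℂ)
    (h : ∀ x : M, ¬IsUnit x → f x = 0) : ∑ u : Mˣ, f u = ∑ x : M, f x := by
  classical
  have h1 : ∑ x : M, f x = ∑ x ∈ Finset.univ.filter (fun x : M => IsUnit x), f x := by
    refine (Finset.sum_filter_of_ne ?_).symm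
    intro x _ hx
    by_contra hu
    exact hx (h x hu)
  rw [h1]
  refine Finset.sum_bij (fun (u : Mˣ) _ => (u : M)) ?_ ?_ ?_ ?_
  · intro u _; simp [u.isUnit]
  · intro u1 _ u2 _ h; exact Units.ext h
  · intro x hx
    rcases (Finset.mem_filter.mp hx).2 with ⟨u, rfl⟩
    exact ⟨u, Finset.mem_univ u, rfl⟩
  · intro u _; rfl

variable (χ : DirichletCharacter ℂ n)

noncomputable def F (m : ℕ) : ℂ :=
  ∑ M : Matrix (Fin m) (Fin m) (ZMod n), χ M.det * psi n a M.trace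

noncomputable def G0 : ℂ := ∑ x : ZMod n, χ x * psi n a x

lemma F_zero : F n a χ 0 = 1 := by
  rw [F, Finset.sum_eq_single_of_mem (0 : Matrix (Fin 0) (Fin 0) (ZMod n))
    (Finset.mem_univ _) (fun M _ hM => absurd (by ext i j; exact i.elim0) hM)]
  simp [Matrix.det_fin_zero, Matrix.trace]

section Block

variable {p q : Type*} [Fintype p] [Fintype q] [DecidableEq p] [DecidableEq q]

lemma trace_fromBlocks {R : Type*} [AddCommMonoid R] (A : Matrix p p R) (B : Matrix p q R)
    (C : Matrix q p R) (D : Matrix q q R) :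
    (Matrix.fromBlocks A B C D).trace = A.trace + D.trace := by
  simp [Matrix.trace, Fintype.sum_sum_type, Matrix.diag]

lemma trace_reindex {R : Type*} [AddCommMonoid R] (e : p ≃ q) (M : Matrix p p R) :
    (Matrix.reindex e e M).trace = M.trace := by
  simp only [Matrix.trace, Matrix.reindex_apply, Matrix.diag, Matrix.submatrix_apply]
  exact Fintype.sum_equiv e.symm _ _ fun i => rfl

/-- blocks as an equiv -/
def blockEquiv (R : Type*) :
    (Matrix p p R × Matrix p q R × Matrix q p R × Matrix q q R) ≃
      Matrix (p ⊕ q) (p ⊕ q) R where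
  toFun x := Matrix.fromBlocks x.1 x.2.1 x.2.2.1 x.2.2.2
  invFun M := (M.toBlocks₁₁, M.toBlocks₁₂, M.toBlocks₂₁, M.toBlocks₂₂)
  left_inv := by
    rintro ⟨A, B, C, D⟩
    simp [Matrix.toBlocks_fromBlocks₁₁, Matrix.toBlocks_fromBlocks₁₂,
      Matrix.toBlocks_fromBlocks₂₁, Matrix.toBlocks_fromBlocks₂₂]
  right_inv M := Matrix.fromBlocks_toBlocks M

end Block

/-- the equiv between 1×1 matrices and scalars -/
def oneByOneEquiv (R : Type*) : Matrix (Fin 1) (Fin 1) R ≃ R where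
  toFun M := M 0 0
  invFun x := Matrix.of fun _ _ => x
  left_inv M := by
    ext i j
    fin_cases i <;> fin_cases j <;> rfl
  right_inv x := rfl

/-- the equiv between m×1 matrices and vectors -/
def colEquiv (m : ℕ) (R : Type*) : Matrix (Fin m) (Fin 1) R ≃ (Fin m → R) where
  toFun M i := M i 0
  invFun v := Matrix.of fun i _ => v i
  left_inv M := by
    ext i j
    fin_cases j
    rfl
  right_inv v := rfl

lemma sum_psi_trace_mul (ha : Int.gcd a n = 1) (m : ℕ) (C : Matrix (Fin 1) (Fin m) (ZMod n)) :
    ∑ v : Matrix (Fin m) (Fin 1) (ZMod n), psi n a (C * v).trace =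
      if C = 0 then (n : ℂ) ^ m else 0 := by
  classical
  have h1 : ∀ v : Matrix (Fin m) (Fin 1) (ZMod n),
      psi n a (C * v).trace = ∏ j : Fin m, psi n a (v j 0 * C 0 j) := by
    intro v
    rw [Matrix.trace_fin_one, Matrix.mul_apply, addchar_map_sum]
    exact Finset.prod_congr rfl fun j _ => by rw [mul_comm]
  rw [Finset.sum_congr rfl fun v _ => h1 v]
  rw [Fintype.sum_equiv (colEquiv m (ZMod n))
        (fun v : Matrix (Fin m) (Fin 1) (ZMod n) => ∏ j : Fin m, psi n a (v j 0 * C 0 j))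
        (fun w : Fin m → ZMod n => ∏ j : Fin m, psi n a (w j * C 0 j))
        (fun v => rfl)]
  have hps := Finset.prod_univ_sum (fun _ : Fin m => (Finset.univ : Finset (ZMod n)))
    (fun j t => psi n a (t * C 0 j))
  rw [Fintype.piFinset_univ] at hps
  rw [← hps]
  by_cases hC : C = 0
  · subst hC
    rw [if_pos rfl]
    have h5 : ∀ j : Fin m, (∑ t : ZMod n, psi n a (t * (0 : Matrix (Fin 1) (Fin m) (ZMod n)) 0 j)) = (n : ℂ) := by
      intro j
      rw [show ((0 : Matrix (Fin 1) (Fin m) (ZMod n)) 0 j) = 0 from rfl, sum_psi_mul n a ha,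
        if_pos rfl]
    rw [Finset.prod_congr rfl fun j _ => h5 j, Finset.prod_const, Finset.card_univ,
      Fintype.card_fin]
  · have hj : ∃ j : Fin m, C 0 j ≠ 0 := by
      by_contra hj
      push_neg at hj
      apply hC
      ext i j
      fin_cases i
      simp [hj j]
    rcases hj with ⟨j, hj⟩
    rw [if_neg hC]
    apply Finset.prod_eq_zero (Finset.mem_univ j)
    rw [sum_psi_mul n a ha, if_neg hj]

/-- the block summand -/
noncomputable def gblk {m : ℕ} (A : Matrix (Fin m) (Fin m) (ZMod n))
    (B : Matrix (Fin m) (Fin 1) (ZMod n)) (C : Matrix (Fin 1) (Fin m) (ZMod n))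
    (D : Matrix (Fin 1) (Fin 1) (ZMod n)) : ℂ :=
  χ (Matrix.fromBlocks A B C D).det * psi n a (Matrix.fromBlocks A B C D).trace

lemma F_succ (ha : Int.gcd a n = 1) (m : ℕ) :
    F n a χ (m + 1) = (n : ℂ) ^ m * G0 n a χ * F n a χ m := by
  classical
  have e : Fin m ⊕ Fin 1 ≃ Fin (m + 1) := finSumFinEquiv
  -- Step 1: express F (m+1) as a fourfold sum
  have step1 : F n a χ (m + 1) = ∑ A : Matrix (Fin m) (Fin m) (ZMod n), ∑ B, ∑ C, ∑ D, gblk n a χ A B C D := by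
    rw [F]
    rw [← Fintype.sum_equiv ((blockEquiv (ZMod n)).trans (Matrix.reindex e e))
        (fun x : Matrix (Fin m) (Fin m) (ZMod n) × Matrix (Fin m) (Fin 1) (ZMod n) ×
            Matrix (Fin 1) (Fin m) (ZMod n) × Matrix (Fin 1) (Fin 1) (ZMod n) =>
          gblk n a χ x.1 x.2.1 x.2.2.1 x.2.2.2)
        (fun M => χ M.det * psi n a M.trace)
        (fun x => by
          show gblk n a χ x.1 x.2.1 x.2.2.1 x.2.2.2 =
            χ ((Matrix.reindex e e) (Matrix.fromBlocks x.1 x.2.1 x.2.2.1 x.2.2.2)).det *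
              psi n a ((Matrix.reindex e e) (Matrix.fromBlocks x.1 x.2.1 x.2.2.1 x.2.2.2)).trace
          rw [Matrix.det_reindex_self, trace_reindex, gblk])]
    rw [Fintype.sum_prod_type]
    refine Finset.sum_congr rfl fun A _ => ?_
    rw [Fintype.sum_prod_type]
    refine Finset.sum_congr rfl fun B _ => ?_
    rw [Fintype.sum_prod_type]
  -- unipotent multiplication identity
  have mulid : ∀ (A : Matrix (Fin m) (Fin m) (ZMod n)) (B : Matrix (Fin m) (Fin 1) (ZMod n))
      (C : Matrix (Fin 1) (Fin m) (ZMod n)) (D : Matrix (Fin 1) (Fin 1) (ZMod n))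
      (v : Matrix (Fin m) (Fin 1) (ZMod n)),
      Matrix.fromBlocks A (A * v + B) C (C * v + D) =
        Matrix.fromBlocks A B C D * Matrix.fromBlocks 1 v 0 1 := by
    intro A B C D v
    rw [Matrix.fromBlocks_multiply]
    simp [add_comm]
  have detuni : ∀ v : Matrix (Fin m) (Fin 1) (ZMod n),
      (Matrix.fromBlocks (1 : Matrix (Fin m) (Fin m) (ZMod n)) v
        (0 : Matrix (Fin 1) (Fin m) (ZMod n)) (1 : Matrix (Fin 1) (Fin 1) (ZMod n))).det = 1 := by
    intro v
    rw [Matrix.det_fromBlocks_zero₂₁]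
    simp
  -- Step 2: for fixed v, shift the sum
  have step2 : ∀ v : Matrix (Fin m) (Fin 1) (ZMod n),
      (∑ A : Matrix (Fin m) (Fin m) (ZMod n), ∑ B, ∑ C, ∑ D, gblk n a χ A B C D) =
        ∑ A : Matrix (Fin m) (Fin m) (ZMod n), ∑ B, ∑ C, ∑ D, gblk n a χ A B C D * psi n a (C * v).trace := by
    intro v
    refine Finset.sum_congr rfl fun A _ => ?_
    have e1 : ∀ (H : Matrix (Fin m) (Fin 1) (ZMod n) → ℂ), (∑ B, H B) = ∑ B, H (A * v + B) :=
      fun H => (Fintype.sum_equiv (Equiv.addLeft (A * v))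
        (fun B => H (A * v + B)) H (fun B => rfl)).symm
    have e2 : ∀ (C : Matrix (Fin 1) (Fin m) (ZMod n)) (H : Matrix (Fin 1) (Fin 1) (ZMod n) → ℂ),
        (∑ D, H D) = ∑ D, H (C * v + D) :=
      fun C H => (Fintype.sum_equiv (Equiv.addLeft (C * v))
        (fun D => H (C * v + D)) H (fun D => rfl)).symm
    calc (∑ B, ∑ C, ∑ D, gblk n a χ A B C D)
        = ∑ B, ∑ C, ∑ D, gblk n a χ A (A * v + B) C D :=
          e1 (fun B => ∑ C, ∑ D, gblk n a χ A B C D)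
      _ = ∑ B, ∑ C, ∑ D, gblk n a χ A (A * v + B) C (C * v + D) :=
          Finset.sum_congr rfl fun B _ => Finset.sum_congr rfl fun C _ =>
            e2 C (fun D => gblk n a χ A (A * v + B) C D)
      _ = ∑ B, ∑ C, ∑ D, gblk n a χ A B C D * psi n a (C * v).trace := by
          refine Finset.sum_congr rfl fun B _ => Finset.sum_congr rfl fun C _ =>
            Finset.sum_congr rfl fun D _ => ?_
          rw [gblk, gblk, trace_fromBlocks, trace_fromBlocks, mulid A B C D v,
            Matrix.det_mul, detuni v, mul_one, Matrix.trace_add]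
          simp only [AddChar.map_add_eq_mul]
          ring
  have cardcol : ((Fintype.card (Matrix (Fin m) (Fin 1) (ZMod n)) : ℕ) : ℂ) = (n : ℂ) ^ m := by
    rw [Fintype.card_congr (colEquiv m (ZMod n)), Fintype.card_fun, Fintype.card_fin, ZMod.card]
    push_cast
    ring
  -- Step 4: sum over v
  have step4 : (n : ℂ) ^ m * (∑ A : Matrix (Fin m) (Fin m) (ZMod n), ∑ B, ∑ C, ∑ D, gblk n a χ A B C D) =
      ∑ A : Matrix (Fin m) (Fin m) (ZMod n), ∑ B, ∑ C, ∑ D, gblk n a χ A B C D * (if C = 0 then (n : ℂ) ^ m else 0) := by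
    calc (n : ℂ) ^ m * (∑ A : Matrix (Fin m) (Fin m) (ZMod n), ∑ B, ∑ C, ∑ D, gblk n a χ A B C D)
        = ∑ _v : Matrix (Fin m) (Fin 1) (ZMod n), (∑ A : Matrix (Fin m) (Fin m) (ZMod n), ∑ B, ∑ C, ∑ D, gblk n a χ A B C D) := by
          rw [Finset.sum_const, Finset.card_univ, nsmul_eq_mul, cardcol]
      _ = ∑ v : Matrix (Fin m) (Fin 1) (ZMod n), ∑ A : Matrix (Fin m) (Fin m) (ZMod n), ∑ B, ∑ C, ∑ D,
            gblk n a χ A B C D * psi n a (C * v).trace :=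
          Finset.sum_congr rfl fun v _ => step2 v
      _ = ∑ A : Matrix (Fin m) (Fin m) (ZMod n), ∑ B, ∑ C, ∑ D, gblk n a χ A B C D * (if C = 0 then (n : ℂ) ^ m else 0) := by
          rw [Finset.sum_comm]
          refine Finset.sum_congr rfl fun A _ => ?_
          rw [Finset.sum_comm]
          refine Finset.sum_congr rfl fun B _ => ?_
          rw [Finset.sum_comm]
          refine Finset.sum_congr rfl fun C _ => ?_
          rw [Finset.sum_comm]
          refine Finset.sum_congr rfl fun D _ => ?_
          rw [← Finset.mul_sum, sum_psi_trace_mul n a ha m C]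
  -- Step 5: evaluate the right-hand side
  have hD : ∀ (A : Matrix (Fin m) (Fin m) (ZMod n)) (B : Matrix (Fin m) (Fin 1) (ZMod n)),
      (∑ D : Matrix (Fin 1) (Fin 1) (ZMod n), gblk n a χ A B 0 D) =
        (χ A.det * psi n a A.trace) * G0 n a χ := by
    intro A B
    have h1 : ∀ D : Matrix (Fin 1) (Fin 1) (ZMod n), gblk n a χ A B 0 D =
        (χ A.det * psi n a A.trace) * (χ (D 0 0) * psi n a (D 0 0)) := by
      intro D
      rw [gblk, Matrix.det_fromBlocks_zero₂₁, trace_fromBlocks, _root_.map_mul, Matrix.det_fin_one,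
        Matrix.trace_fin_one, AddChar.map_add_eq_mul]
      ring
    rw [Finset.sum_congr rfl fun D _ => h1 D, ← Finset.mul_sum]
    congr 1
    rw [G0]
    exact Fintype.sum_equiv (oneByOneEquiv (ZMod n))
      (fun D : Matrix (Fin 1) (Fin 1) (ZMod n) => χ (D 0 0) * psi n a (D 0 0))
      (fun x : ZMod n => χ x * psi n a x) (fun D => rfl)
  have step5 : (∑ A : Matrix (Fin m) (Fin m) (ZMod n), ∑ B, ∑ C, ∑ D, gblk n a χ A B C D * (if C = 0 then (n : ℂ) ^ m else 0))
      = (n : ℂ) ^ m * ((n : ℂ) ^ m * G0 n a χ * F n a χ m) := by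
    calc (∑ A : Matrix (Fin m) (Fin m) (ZMod n), ∑ B, ∑ C, ∑ D, gblk n a χ A B C D * (if C = 0 then (n : ℂ) ^ m else 0))
        = ∑ A : Matrix (Fin m) (Fin m) (ZMod n), ∑ B, ∑ D, gblk n a χ A B 0 D * (n : ℂ) ^ m := by
          refine Finset.sum_congr rfl fun A _ => Finset.sum_congr rfl fun B _ => ?_
          have h2 : ∀ C : Matrix (Fin 1) (Fin m) (ZMod n),
              (∑ D, gblk n a χ A B C D * (if C = 0 then (n : ℂ) ^ m else 0)) =
                if C = 0 then (∑ D, gblk n a χ A B C D * (n : ℂ) ^ m) else 0 := by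
            intro C
            split_ifs with h <;> simp
          rw [Finset.sum_congr rfl fun C _ => h2 C,
            Finset.sum_ite_eq' Finset.univ (0 : Matrix (Fin 1) (Fin m) (ZMod n))
              (fun C => ∑ D, gblk n a χ A B C D * (n : ℂ) ^ m)]
          simp only [Finset.mem_univ, if_true]
      _ = ∑ A : Matrix (Fin m) (Fin m) (ZMod n), ∑ B : Matrix (Fin m) (Fin 1) (ZMod n), ((χ A.det * psi n a A.trace) * G0 n a χ * (n : ℂ) ^ m) := by
          refine Finset.sum_congr rfl fun A _ => Finset.sum_congr rfl fun B _ => ?_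
          rw [← Finset.sum_mul, hD A B]
      _ = ∑ A : Matrix (Fin m) (Fin m) (ZMod n), (n : ℂ) ^ m * ((χ A.det * psi n a A.trace) * G0 n a χ * (n : ℂ) ^ m) := by
          refine Finset.sum_congr rfl fun A _ => ?_
          rw [Finset.sum_const, Finset.card_univ, nsmul_eq_mul, cardcol]
      _ = (n : ℂ) ^ m * ((n : ℂ) ^ m * G0 n a χ * F n a χ m) := by
          rw [Finset.sum_congr rfl fun A (_ : A ∈ Finset.univ) =>
            (show (n : ℂ) ^ m * ((χ A.det * psi n a A.trace) * G0 n a χ * (n : ℂ) ^ m) =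
              ((n : ℂ) ^ m * (G0 n a χ * (n : ℂ) ^ m)) * (χ A.det * psi n a A.trace) from
              by ring), ← Finset.mul_sum, F]
          ring
  apply mul_left_cancel₀ (pow_ne_zero m (hn0 n))
  rw [step1, step4, step5]

lemma F_formula (ha : Int.gcd a n = 1) (r : ℕ) :
    F n a χ r = G0 n a χ ^ r * (n : ℂ) ^ (r * (r - 1) / 2) := by
  induction r with
  | zero => simp [F_zero]
  | succ m ih =>
    rw [F_succ n a χ ha m, ih]
    have hexp : (m + 1) * (m + 1 - 1) / 2 = m + m * (m - 1) / 2 := by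
      rcases m with - | k
      · simp
      · obtain ⟨t, ht⟩ := Nat.even_mul_succ_self k
        have e2 : (k + 1) * k = 2 * t := by
          calc (k + 1) * k = k * (k + 1) := Nat.mul_comm _ _
            _ = 2 * t := by omega
        have h4 : k + 1 + 1 - 1 = k + 1 := rfl
        have h5 : k + 1 - 1 = k := rfl
        rw [h4, h5]
        have e1 : (k + 1 + 1) * (k + 1) = (k + 1) * k + 2 * (k + 1) := by ring
        rw [e1, e2]
        omega
    rw [hexp, pow_add, pow_succ]
    ring

end GaussGLAux

/-- Gauss sum for `GL_r(ℤ/nℤ)`: if `λ(x) = exp(2πi a x/n)` has order `n`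
(i.e. `gcd(a,n) = 1`) and `χ` is a multiplicative character of `(ℤ/nℤ)*`, then
`∑_{X ∈ GL_r} χ(det X) λ(tr X) = G(ℤ/nℤ, χ, λ)^r · n^{r(r-1)/2}`. -/
theorem gauss_sum_GL_primitive (n r : ℕ) [NeZero n] (hr : 1 ≤ r) (a : ℤ)
    (ha : Int.gcd a n = 1) (χ : DirichletCharacter ℂ n) :
    (∑ X : GL (Fin r) (ZMod n),
        χ (X.val.det) * addChar n a (X.val.trace).val) =
      (∑ x : (ZMod n)ˣ, χ x * addChar n a (x : ZMod n).val) ^ r *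
        (n : ℂ) ^ (r * (r - 1) / 2) := by
  classical
  have hL : (∑ X : GL (Fin r) (ZMod n), χ (X.val.det) * addChar n a (X.val.trace).val)
      = GaussGLAux.F n a χ r := by
    rw [GaussGLAux.F]
    rw [← GaussGLAux.sum_units_eq (fun M : Matrix (Fin r) (Fin r) (ZMod n) =>
      χ M.det * GaussGLAux.psi n a M.trace) (fun M hM => by
        show χ M.det * GaussGLAux.psi n a M.trace = 0
        rw [χ.map_nonunit, zero_mul]
        exact fun h => hM ((Matrix.isUnit_iff_isUnit_det M).mpr h))]
    exact Finset.sum_congr rfl fun X _ => by rw [GaussGLAux.psi_apply]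
  have hR : (∑ x : (ZMod n)ˣ, χ x * addChar n a (x : ZMod n).val)
      = GaussGLAux.G0 n a χ := by
    rw [GaussGLAux.G0]
    rw [← GaussGLAux.sum_units_eq (fun x : ZMod n => χ x * GaussGLAux.psi n a x)
      (fun x hx => by
        show χ x * GaussGLAux.psi n a x = 0
        rw [χ.map_nonunit hx, zero_mul])]
    exact Finset.sum_congr rfl fun x _ => by rw [GaussGLAux.psi_apply]
  rw [hL, hR, GaussGLAux.F_formula n a χ ha r]
end

section
/- Let λ(x) = exp(2πi a x/n) be an additive character of Z/nZ with d = gcd(a,n), let χ be a multiplicative character of (Z/nZ)* with conductor f. If f does not divide n/d, then G(GL_r(Z/nZ), χ, λ) = ∑_{X ∈ GL_r(Z/nZ)} χ(det X) λ(tr X) = 0. -/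
open scoped BigOperators

open DirichletCharacter
lemma unitsMap_eq_one_iff {n m : ℕ} [NeZero n] (hmn : m ∣ n) (u : (ZMod n)ˣ) :
    ZMod.unitsMap hmn u = 1 ↔ (u : ZMod n).val ≡ 1 [MOD m] := by
  have hval : ((ZMod.unitsMap hmn u : ZMod m)) = (((u : ZMod n).val : ℕ) : ZMod m) := by
    simp only [ZMod.unitsMap, Units.coe_map, MonoidHom.coe_coe, ZMod.castHom_apply]
    exact (ZMod.natCast_val _).symm
  constructor
  · intro hu
    have hu1 := congrArg (Units.val) hu
    rw [hval, Units.val_one] at hu1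
    rwa [← Nat.cast_one, ZMod.natCast_eq_natCast_iff] at hu1
  · intro h
    ext
    rw [hval, Units.val_one, ← Nat.cast_one, ZMod.natCast_eq_natCast_iff]
    exact h

lemma conductor_dvd_of_factorsThrough {n : ℕ} [NeZero n] (χ : DirichletCharacter ℂ n) {m : ℕ}
    (h : χ.FactorsThrough m) : χ.conductor ∣ m := by
  set f := χ.conductor with hfdef
  set g := Nat.gcd f m with hg
  have hfn : f ∣ n := conductor_dvd_level χ
  have hmn : m ∣ n := h.dvd
  have hgn : g ∣ n := (Nat.gcd_dvd_left f m).trans hfn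
  have hft : χ.FactorsThrough g := by
    rw [factorsThrough_iff_ker_unitsMap hgn]
    intro u hu
    have humod : (u : ZMod n).val ≡ 1 [MOD g] :=
      (unitsMap_eq_one_iff hgn u).mp hu
    set A := (u : ZMod n).val with hA
    obtain ⟨k, hkf, hkm⟩ := Nat.chineseRemainder' (n := f) (m := m) humod
    -- k is coprime to f and to m
    have hAn : Nat.Coprime A n := ZMod.val_coe_unit_coprime u
    have hkfc : Nat.Coprime f k := by
      have h1 : Nat.Coprime f A := (hAn.coprime_dvd_right hfn).symm
      have : Nat.gcd f k = Nat.gcd f A := by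
        rw [Nat.gcd_rec f k, Nat.gcd_rec f A, hkf]
      rwa [Nat.Coprime, this]
    have hkmc : Nat.Coprime m k := by
      have : Nat.gcd m k = Nat.gcd m 1 := by
        rw [Nat.gcd_rec m k, Nat.gcd_rec m 1, hkm]
      rw [Nat.Coprime, this, Nat.gcd_one_right]
    set L := Nat.lcm f m with hL
    have hLn : L ∣ n := Nat.lcm_dvd hfn hmn
    have hkL : Nat.Coprime k L :=
      Nat.Coprime.coprime_dvd_right (Nat.lcm_dvd (dvd_mul_right f m) (dvd_mul_left m f))
        (Nat.Coprime.mul_right hkfc.symm hkmc.symm)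
    obtain ⟨u', hu'⟩ := ZMod.unitsMap_surjective hLn (ZMod.unitOfCoprime k hkL)
    have hu'L : (u' : ZMod n).val ≡ k [MOD L] := by
      have := congrArg (Units.val) hu'
      simp only [ZMod.unitsMap, Units.coe_map, MonoidHom.coe_coe, ZMod.coe_unitOfCoprime] at this
      rw [ZMod.castHom_apply, ← ZMod.natCast_val] at this
      exact (ZMod.natCast_eq_natCast_iff _ _ _).mp this
    -- χ u' = 1 via factorization through m
    have hm1 : χ.toUnitHom u' = 1 := by
      have := h.eq_changeLevel
      rw [this, changeLevel_toUnitHom]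
      have : ZMod.unitsMap h.dvd u' = 1 := by
        rw [unitsMap_eq_one_iff]
        exact ((hu'L.of_dvd (Nat.dvd_lcm_right f m)).trans hkm)
      simp [MonoidHom.comp_apply, this]
    -- χ u = χ u' via factorization through f
    have hfu : χ.toUnitHom u = χ.toUnitHom u' := by
      have hc := (factorsThrough_conductor χ).eq_changeLevel
      conv_lhs => rw [hc]
      conv_rhs => rw [hc]
      rw [changeLevel_toUnitHom]
      simp only [MonoidHom.comp_apply]
      congr 1
      ext
      simp only [ZMod.unitsMap, Units.coe_map, MonoidHom.coe_coe, ZMod.castHom_apply,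
        ← ZMod.natCast_val]
      refine (ZMod.natCast_eq_natCast_iff _ _ _).mpr ?_
      exact ((hu'L.of_dvd (Nat.dvd_lcm_left f m)).trans hkf).symm
    rw [MonoidHom.mem_ker, hfu, hm1]
  have h1 : f ≤ g := Nat.sInf_le hft
  have h2 : g ∣ f := Nat.gcd_dvd_left f m
  have hfne : f ≠ 0 := conductor_ne_zero χ
  have hgf : g = f := Nat.le_antisymm (Nat.le_of_dvd (Nat.pos_of_ne_zero hfne) h2) h1
  exact hgf ▸ Nat.gcd_dvd_right f m

lemma addChar_congr {n : ℕ} [NeZero n] (a : ℤ) {y z : ZMod n}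
    (h : (a : ZMod n) * y = (a : ZMod n) * z) :
    addChar n a y.val = addChar n a z.val := by
  have hdvd : (n : ℤ) ∣ a * (y.val : ℤ) - a * (z.val : ℤ) := by
    rw [← ZMod.intCast_zmod_eq_zero_iff_dvd]
    push_cast
    rw [ZMod.natCast_val, ZMod.natCast_val, ZMod.cast_id, ZMod.cast_id, h, sub_self]
  obtain ⟨k, hk⟩ := hdvd
  have hn : (n : ℂ) ≠ 0 := Nat.cast_ne_zero.mpr (NeZero.ne n)
  unfold addChar
  have hC : (a : ℂ) * (y.val : ℂ) - a * z.val = n * k := by exact_mod_cast hk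
  have key : (2 * Real.pi * Complex.I * a * y.val / n : ℂ)
      = 2 * Real.pi * Complex.I * a * z.val / n + k * (2 * Real.pi * Complex.I) := by
    have h2 : (2 * (Real.pi : ℂ) * Complex.I * a * y.val)
        = 2 * Real.pi * Complex.I * a * z.val + k * (2 * Real.pi * Complex.I) * n := by
      linear_combination (2 * (Real.pi : ℂ) * Complex.I) * hC
    rw [h2, add_div, mul_div_cancel_right₀ _ hn]
  rw [key, Complex.exp_add, Complex.exp_int_mul_two_pi_mul_I, mul_one]

/-- If the conductor `f` of `χ` does not divide `n/d`, where `d = gcd(a,n)` and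
`λ(x) = exp(2πi a x/n)`, then the Gauss sum `G(GL_r(ℤ/nℤ), χ, λ)` vanishes. -/
theorem gauss_sum_GL_eq_zero (n r : ℕ) [NeZero n] (hr : 1 ≤ r) (a : ℤ) (d : ℕ)
    (hd : d = Int.gcd a n) (χ : DirichletCharacter ℂ n)
    (hf : ¬ χ.conductor ∣ n / d) :
    (∑ X : GL (Fin r) (ZMod n),
        χ (X.val.det) * addChar n a (X.val.trace).val) = 0 := by
  have hdn : d ∣ n := by
    have := Int.gcd_dvd_right (a := a) (b := (n : ℤ))
    rw [← hd] at this
    exact_mod_cast this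
  have hda : (d : ℤ) ∣ a := by
    have := Int.gcd_dvd_left (a := a) (b := (n : ℤ))
    rwa [← hd] at this
  set m := n / d with hm
  have hmn : m ∣ n := Nat.div_dvd_of_dvd hdn
  -- obtain a unit c ≡ 1 mod m with χ c ≠ 1
  have hFT : ¬ χ.FactorsThrough m := fun h => hf (conductor_dvd_of_factorsThrough χ h)
  rw [factorsThrough_iff_ker_unitsMap hmn] at hFT
  simp only [SetLike.le_def, not_forall] at hFT
  obtain ⟨c, hc1, hc2⟩ := hFT
  rw [MonoidHom.mem_ker] at hc1
  rw [MonoidHom.mem_ker] at hc2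
  have hχc : χ ((c : ZMod n)) ≠ 1 := by
    intro hh
    exact hc2 (Units.ext (by rw [MulChar.coe_toUnitHom, hh, Units.val_one]))
  -- key congruence : a * c = a in ZMod n
  have hcm : (((c : ZMod n).val : ℕ) : ZMod m) = 1 := by
    rw [unitsMap_eq_one_iff hmn c] at hc1
    rw [← Nat.cast_one, ZMod.natCast_eq_natCast_iff]
    exact hc1
  have hmc : (m : ℤ) ∣ ((c : ZMod n).val : ℤ) - 1 := by
    rw [← ZMod.intCast_zmod_eq_zero_iff_dvd]
    push_cast
    rw [hcm, sub_self]
  have hndvd : (n : ℤ) ∣ a * (((c : ZMod n).val : ℤ) - 1) := by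
    have hnm : (n : ℤ) = (d : ℤ) * (m : ℤ) := by exact_mod_cast (Nat.mul_div_cancel' hdn).symm
    rw [hnm]
    exact mul_dvd_mul hda hmc
  have hac : (a : ZMod n) * ((c : ZMod n)) = (a : ZMod n) := by
    have h0 : ((a * (((c : ZMod n).val : ℤ) - 1) : ℤ) : ZMod n) = 0 :=
      (ZMod.intCast_zmod_eq_zero_iff_dvd _ _).mpr hndvd
    push_cast at h0
    rw [ZMod.natCast_val, ZMod.cast_id] at h0
    rw [mul_sub, mul_one, sub_eq_zero] at h0
    exact h0
  -- the diagonal unit matrix g = diag(c,1,...,1)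
  set i0 : Fin r := ⟨0, hr⟩ with hi0
  set dv : Fin r → ZMod n := fun i => if i = i0 then (c : ZMod n) else 1 with hdv
  set dvi : Fin r → ZMod n := fun i => if i = i0 then ((c⁻¹ : (ZMod n)ˣ) : ZMod n) else 1 with hdvi
  have hprod : (Matrix.diagonal dv) * (Matrix.diagonal dvi) = 1 := by
    rw [Matrix.diagonal_mul_diagonal]
    have : (fun i => dv i * dvi i) = fun _ => (1 : ZMod n) := by
      funext i
      by_cases h : i = i0 <;> simp [hdv, hdvi, h]
    rw [this, Matrix.diagonal_one]
  have hprod' : (Matrix.diagonal dvi) * (Matrix.diagonal dv) = 1 := by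
    rw [Matrix.diagonal_mul_diagonal]
    have : (fun i => dvi i * dv i) = fun _ => (1 : ZMod n) := by
      funext i
      by_cases h : i = i0 <;> simp [hdv, hdvi, h]
    rw [this, Matrix.diagonal_one]
  set g : GL (Fin r) (ZMod n) := ⟨Matrix.diagonal dv, Matrix.diagonal dvi, hprod, hprod'⟩ with hg
  have hdet : (Matrix.diagonal dv).det = (c : ZMod n) := by
    rw [Matrix.det_diagonal, hdv]
    simp [Finset.prod_ite_eq']
  set S := (∑ X : GL (Fin r) (ZMod n),
      χ (X.val.det) * addChar n a (X.val.trace).val) with hS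
  have step1 : S = ∑ X : GL (Fin r) (ZMod n),
      χ ((g * X).val.det) * addChar n a ((g * X).val.trace).val :=
    Fintype.sum_equiv (Equiv.mulLeft g) _ _ (fun X => rfl) |>.symm
  have step2 : ∀ X : GL (Fin r) (ZMod n),
      χ ((g * X).val.det) * addChar n a ((g * X).val.trace).val
        = χ ((c : ZMod n)) * (χ (X.val.det) * addChar n a (X.val.trace).val) := by
    intro X
    have hval : (g * X).val = Matrix.diagonal dv * X.val := rfl
    have hdet2 : (g * X).val.det = (c : ZMod n) * X.val.det := by
      rw [hval, Matrix.det_mul, hdet]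
    have htr : addChar n a ((g * X).val.trace).val = addChar n a (X.val.trace).val := by
      apply addChar_congr
      rw [hval]
      have htr2 : (Matrix.diagonal dv * X.val).trace = ∑ i, dv i * X.val i i := by
        simp [Matrix.trace, Matrix.diag, Matrix.diagonal_mul]
      have htr3 : X.val.trace = ∑ i, X.val i i := by
        simp [Matrix.trace, Matrix.diag]
      rw [htr2, htr3, Finset.mul_sum, Finset.mul_sum]
      apply Finset.sum_congr rfl
      intro i _
      by_cases h : i = i0
      · simp only [hdv, h, eq_self_iff_true, ite_true]
        rw [← mul_assoc, hac]
      · rw [hdv]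
        simp only [if_neg h, one_mul]
    rw [hdet2, htr, map_mul]
    ring
  have step3 : S = χ ((c : ZMod n)) * S := by
    conv_lhs => rw [step1]
    rw [Finset.sum_congr rfl (fun X _ => step2 X), ← Finset.mul_sum]
  have : (χ ((c : ZMod n)) - 1) * S = 0 := by
    rw [sub_mul, one_mul, ← step3, sub_self]
  rcases mul_eq_zero.mp this with h | h
  · exact absurd (sub_eq_zero.mp h) hχc
  · exact h
end

section
/- If λ is an additive character of Z/nZ of order n, then G(SL_r(Z/nZ), λ) = ∑_{X ∈ SL_r(Z/nZ)} λ(tr X) equals n^{r(r-1)/2} · K_r(Z/nZ, λ), where K_r(Z/nZ, λ) = ∑_{x_1 ··· x_r = 1, x_i ∈ Z/nZ} λ(x_1 + ··· + x_r) is the hyper-Kloosterman sum. -/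
open scoped BigOperators




namespace GSL

section
variable {R : Type*} [CommRing R]


def blk {r : ℕ} (x : R) (w : Fin r → R) (B : Matrix (Fin r) (Fin r) R) :
    Matrix (Fin (r+1)) (Fin (r+1)) R :=
  Matrix.of (Fin.cons (Fin.cons x w) (fun i => Fin.cons 0 (B i)))

@[simp] lemma blk_zero_zero {r : ℕ} (x : R) (w : Fin r → R) (B : Matrix (Fin r) (Fin r) R) : blk x w B 0 0 = x := rfl
@[simp] lemma blk_zero_succ {r : ℕ} (x : R) (w : Fin r → R) (B : Matrix (Fin r) (Fin r) R) (j : Fin r) :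
    blk x w B 0 j.succ = w j := rfl
@[simp] lemma blk_succ_zero {r : ℕ} (x : R) (w : Fin r → R) (B : Matrix (Fin r) (Fin r) R) (i : Fin r) :
    blk x w B i.succ 0 = 0 := by simp [blk]
@[simp] lemma blk_succ_succ {r : ℕ} (x : R) (w : Fin r → R) (B : Matrix (Fin r) (Fin r) R) (i j : Fin r) :
    blk x w B i.succ j.succ = B i j := by simp [blk]

lemma blk_trace {r : ℕ} (x : R) (w : Fin r → R) (B : Matrix (Fin r) (Fin r) R) : (blk x w B).trace = x + B.trace := by
  rw [Matrix.trace, Matrix.trace, Fin.sum_univ_succ]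
  simp [Matrix.diag]

lemma blk_det {r : ℕ} (x : R) (w : Fin r → R) (B : Matrix (Fin r) (Fin r) R) : (blk x w B).det = x * B.det := by
  rw [Matrix.det_succ_column_zero]
  rw [Finset.sum_eq_single 0]
  · simp only [Fin.val_zero, pow_zero, one_mul, blk_zero_zero, Fin.succAbove_zero]
    have : (blk x w B).submatrix (Fin.succ) (Fin.succ) = B := by
      ext i j; simp [Matrix.submatrix]
    rw [this]
  · intro i _ hi
    obtain ⟨j, rfl⟩ := Fin.eq_succ_of_ne_zero hi
    simp
  · intro h; exact absurd (Finset.mem_univ _) h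



def shearE {r : ℕ} (w : Fin r → R) : Matrix (Fin (r+1)) (Fin (r+1)) R :=
  Matrix.of fun i j => if i = 0 then (Fin.cons (0 : R) w : Fin (r+1) → R) j else 0

def shear {r : ℕ} (w : Fin r → R) : Matrix (Fin (r+1)) (Fin (r+1)) R :=
  1 + shearE w

lemma shearE_mul_shearE {r : ℕ} (w v : Fin r → R) : shearE w * shearE v = 0 := by
  ext i j
  rw [Matrix.mul_apply]
  apply Finset.sum_eq_zero
  intro k _
  by_cases hk : k = (0 : Fin (r+1))
  · subst hk; simp [shearE]
  · simp [shearE, hk]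

lemma shearE_add {r : ℕ} (w v : Fin r → R) : shearE (w + v) = shearE w + shearE v := by
  ext i j
  by_cases hi : i = 0
  · subst hi
    rcases Fin.eq_zero_or_eq_succ j with rfl | ⟨m, rfl⟩ <;> simp [shearE]
  · simp [shearE, hi]

lemma shear_mul_shear {r : ℕ} (w v : Fin r → R) : shear w * shear v = shear (w + v) := by
  simp [shear, mul_add, add_mul, shearE_mul_shearE, shearE_add]
  abel

lemma shear_zero {r : ℕ} : shear (0 : Fin r → R) = 1 := by
  ext i j
  by_cases hi : i = 0
  · subst hi
    rcases Fin.eq_zero_or_eq_succ j with rfl | ⟨m, rfl⟩ <;> simp [shear, shearE]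
  · simp [shear, shearE, hi]

lemma shear_det {r : ℕ} (w : Fin r → R) : (shear w).det = 1 := by
  have h : (shear w).BlockTriangular id := by
    intro i j hij
    have hi : i ≠ 0 := by
      intro h0; subst h0; exact absurd hij (by simp)
    have hij' : (i : Fin (r+1)) ≠ j := fun h0 => by subst h0; exact lt_irrefl _ hij
    simp [shear, shearE, hi, Matrix.one_apply, hij']
  rw [Matrix.det_of_upperTriangular h]
  apply Finset.prod_eq_one
  intro i _
  by_cases hi : i = 0
  · subst hi; simp [shear, shearE]
  · simp [shear, shearE, hi]

lemma trace_mul_shear {r : ℕ} (X : Matrix (Fin (r+1)) (Fin (r+1)) R) (w : Fin r → R) :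
    (X * shear w).trace = X.trace + ∑ j : Fin r, X j.succ 0 * w j := by
  rw [shear, mul_add, Matrix.trace_add, mul_one]
  congr 1
  have h : ∀ i j, (X * shearE w) i j = X i 0 * (Fin.cons (0:R) w : Fin (r+1) → R) j := by
    intro i j
    rw [Matrix.mul_apply, Finset.sum_eq_single (0 : Fin (r+1))]
    · simp [shearE]
    · intro k _ hk; simp [shearE, hk]
    · intro h; exact absurd (Finset.mem_univ _) h
  rw [Matrix.trace]
  simp only [Matrix.diag, h]
  rw [Fin.sum_univ_succ]
  simp


end


variable (n : ℕ) [NeZero n] (a : ℤ)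

/-- the character on `ZMod n`. -/
noncomputable def e (z : ZMod n) : ℂ := addChar n a z.val

lemma addChar_add_nat (u v : ℕ) :
    addChar n a (u + v) = addChar n a u * addChar n a v := by
  rw [addChar, addChar, addChar, ← Complex.exp_add]
  congr 1
  have hn : (n : ℂ) ≠ 0 := Nat.cast_ne_zero.2 (NeZero.ne n)
  field_simp
  push_cast; ring

lemma addChar_nat_mul_self (k : ℕ) : addChar n a (n * k) = 1 := by
  rw [addChar]
  have hn : (n : ℂ) ≠ 0 := Nat.cast_ne_zero.2 (NeZero.ne n)
  have : 2 * (Real.pi:ℂ) * Complex.I * a * (↑(n * k)) / n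
      = (a * k : ℤ) * (2 * Real.pi * Complex.I) := by
    push_cast; field_simp
  rw [this, Complex.exp_int_mul_two_pi_mul_I]

lemma addChar_mod (u : ℕ) : addChar n a (u % n) = addChar n a u := by
  conv_rhs => rw [← Nat.mod_add_div u n]
  rw [addChar_add_nat, addChar_nat_mul_self, mul_one]

lemma e_add (x y : ZMod n) : e n a (x + y) = e n a x * e n a y := by
  rw [e, e, e, ZMod.val_add, addChar_mod, addChar_add_nat]

omit [NeZero n] in
lemma e_zero : e n a 0 = 1 := by
  simp [e, addChar, ZMod.val_zero]

lemma e_mul_eq_pow (t m : ZMod n) :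
    e n a (t * m) = (addChar n a m.val) ^ t.val := by
  rw [e, ZMod.val_mul, addChar_mod]
  rw [addChar, addChar, ← Complex.exp_nat_mul]
  congr 1
  push_cast
  ring

lemma addChar_pow_n (m : ℕ) : (addChar n a m) ^ n = 1 := by
  rw [addChar, ← Complex.exp_nat_mul]
  have hn : (n : ℂ) ≠ 0 := Nat.cast_ne_zero.2 (NeZero.ne n)
  have : (n : ℂ) * (2 * Real.pi * Complex.I * a * m / n)
      = (a * m : ℤ) * (2 * Real.pi * Complex.I) := by
    push_cast; field_simp
  rw [this, Complex.exp_int_mul_two_pi_mul_I]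


lemma addChar_ne_one' (ha : Int.gcd a n = 1) {m : ZMod n} (hm : m ≠ 0) :
    addChar n a m.val ≠ 1 := by
  intro h
  rw [addChar, Complex.exp_eq_one_iff] at h
  obtain ⟨k, hk⟩ := h
  have hn : (n : ℂ) ≠ 0 := Nat.cast_ne_zero.2 (NeZero.ne n)
  have hpi : (2 * (Real.pi:ℂ) * Complex.I) ≠ 0 := by
    simp [Real.pi_ne_zero, Complex.I_ne_zero]
  have h2 : (a : ℂ) * m.val = k * n := by
    have h2 : 2 * (Real.pi:ℂ) * Complex.I * (a * m.val) = 2 * Real.pi * Complex.I * (k * n) := by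
      rw [div_eq_iff hn] at hk
      linear_combination hk
    exact mul_left_cancel₀ hpi h2
  have h3 : (a : ℤ) * m.val = k * n := by exact_mod_cast h2
  have hdvd : (n : ℤ) ∣ a * m.val := ⟨k, by linarith⟩
  have hcop : IsCoprime (n : ℤ) a := by
    rw [Int.isCoprime_iff_gcd_eq_one, Int.gcd_comm]; exact ha
  have hdvd2 : (n : ℤ) ∣ (m.val : ℤ) := hcop.dvd_of_dvd_mul_left hdvd
  have hdvd3 : n ∣ m.val := by exact_mod_cast hdvd2
  have hlt : m.val < n := ZMod.val_lt m
  have hne : m.val ≠ 0 := by simpa [ZMod.val_eq_zero] using hm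
  exact absurd (Nat.le_of_dvd (Nat.pos_of_ne_zero hne) hdvd3) (not_le.2 hlt)

lemma sum_val (f : ℕ → ℂ) : ∑ t : ZMod n, f t.val = ∑ i ∈ Finset.range n, f i :=
  Finset.sum_nbij' (fun t => t.val) (fun i => (i : ZMod n))
    (fun t _ => Finset.mem_range.2 (ZMod.val_lt t)) (fun i _ => Finset.mem_univ _)
    (fun t _ => ZMod.natCast_zmod_val t)
    (fun i hi => ZMod.val_cast_of_lt (Finset.mem_range.1 hi)) (fun t _ => rfl)

lemma ortho (ha : Int.gcd a n = 1) (m : ZMod n) :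
    ∑ t : ZMod n, e n a (t * m) = if m = 0 then (n : ℂ) else 0 := by
  have h1 : ∑ t : ZMod n, e n a (t * m) = ∑ i ∈ Finset.range n, (addChar n a m.val) ^ i := by
    rw [← sum_val n (fun i => (addChar n a m.val) ^ i)]
    exact Finset.sum_congr rfl (fun t _ => e_mul_eq_pow n a t m)
  rw [h1]
  by_cases hm : m = 0
  · subst hm
    have h0 : addChar n a 0 = 1 := by simp [addChar]
    simp [ZMod.val_zero, h0]
  · rw [if_neg hm, geom_sum_eq (addChar_ne_one' n a ha hm), addChar_pow_n, sub_self, zero_div]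



section Main
variable (n : ℕ) [NeZero n] (a : ℤ)

lemma e_sum {ι : Type*} (s : Finset ι) (f : ι → ZMod n) :
    e n a (∑ i ∈ s, f i) = ∏ i ∈ s, e n a (f i) := by
  induction s using Finset.cons_induction with
  | empty => simp [e_zero]
  | cons i s hi ih => rw [Finset.sum_cons, Finset.prod_cons, e_add, ih]

lemma prod_ite_zero {r : ℕ} (c : Fin r → ZMod n) :
    (∏ j : Fin r, if c j = 0 then (n : ℂ) else 0)
      = if (∀ j, c j = 0) then (n : ℂ) ^ r else 0 := by
  by_cases h : ∀ j, c j = 0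
  · rw [if_pos h]
    rw [Finset.prod_congr rfl (fun j _ => if_pos (h j))]
    simp
  · rw [if_neg h]
    push_neg at h
    obtain ⟨j, hj⟩ := h
    exact Finset.prod_eq_zero (Finset.mem_univ j) (if_neg hj)

/-- right multiplication by a shear is a bijection on matrices -/
def shearEquiv {r : ℕ} (w : Fin r → ZMod n) :
    Matrix (Fin (r+1)) (Fin (r+1)) (ZMod n) ≃ Matrix (Fin (r+1)) (Fin (r+1)) (ZMod n) where
  toFun X := X * shear w
  invFun X := X * shear (-w)
  left_inv X := by
    show X * shear w * shear (-w) = X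
    rw [mul_assoc, shear_mul_shear, add_neg_cancel, shear_zero, mul_one]
  right_inv X := by
    show X * shear (-w) * shear w = X
    rw [mul_assoc, shear_mul_shear, neg_add_cancel, shear_zero, mul_one]

variable {p : ZMod n → Prop} [DecidablePred p]

lemma L1 {r : ℕ} (w : Fin r → ZMod n) :
    (∑ X : Matrix (Fin (r+1)) (Fin (r+1)) (ZMod n),
        if p X.det then e n a ((X * shear w).trace) else 0)
      = ∑ X : Matrix (Fin (r+1)) (Fin (r+1)) (ZMod n), if p X.det then e n a X.trace else 0 := by
  refine Fintype.sum_equiv (shearEquiv n w) _ _ (fun X => ?_)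
  have hdet : ((shearEquiv n w) X).det = X.det := by
    simp [shearEquiv, Matrix.det_mul, shear_det]
  rw [hdet]
  rfl

lemma L2 {r : ℕ} (ha : Int.gcd a n = 1) :
    (∑ X : Matrix (Fin (r+1)) (Fin (r+1)) (ZMod n), if p X.det then e n a X.trace else 0)
      = ∑ X : Matrix (Fin (r+1)) (Fin (r+1)) (ZMod n),
          if p X.det ∧ ∀ j : Fin r, X j.succ 0 = 0 then e n a X.trace else 0 := by
  have hn : ((n : ℂ)) ^ r ≠ 0 := pow_ne_zero _ (Nat.cast_ne_zero.2 (NeZero.ne n))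
  apply mul_left_cancel₀ hn
  calc ((n:ℂ)^r) * ∑ X : Matrix (Fin (r+1)) (Fin (r+1)) (ZMod n),
        (if p X.det then e n a X.trace else 0)
      = ∑ w : Fin r → ZMod n, ∑ X : Matrix (Fin (r+1)) (Fin (r+1)) (ZMod n),
          (if p X.det then e n a X.trace else 0) := by
        rw [Finset.sum_const, Finset.card_univ, nsmul_eq_mul]
        congr 1
        rw [Fintype.card_fun]
        simp [ZMod.card]
    _ = ∑ w : Fin r → ZMod n, ∑ X : Matrix (Fin (r+1)) (Fin (r+1)) (ZMod n),
          (if p X.det then e n a ((X * shear w).trace) else 0) := by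
        exact Finset.sum_congr rfl (fun w _ => (L1 n a w).symm)
    _ = ∑ X : Matrix (Fin (r+1)) (Fin (r+1)) (ZMod n), ∑ w : Fin r → ZMod n,
          (if p X.det then e n a ((X * shear w).trace) else 0) := Finset.sum_comm
    _ = ∑ X : Matrix (Fin (r+1)) (Fin (r+1)) (ZMod n),
          (if p X.det then e n a X.trace *
            (if (∀ j : Fin r, X j.succ 0 = 0) then (n:ℂ)^r else 0) else 0) := by
        refine Finset.sum_congr rfl (fun X _ => ?_)
        by_cases hp : p X.det
        · simp only [if_pos hp]
          have h1 : ∀ w : Fin r → ZMod n, e n a ((X * shear w).trace)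
              = e n a X.trace * ∏ j : Fin r, e n a (w j * X j.succ 0) := by
            intro w
            rw [trace_mul_shear, e_add, e_sum]
            congr 1
            exact Finset.prod_congr rfl (fun j _ => by rw [mul_comm])
          rw [Finset.sum_congr rfl (fun w _ => h1 w), ← Finset.mul_sum]
          congr 1
          have h2 : ∑ w : Fin r → ZMod n, ∏ j : Fin r, e n a (w j * X j.succ 0)
              = ∏ j : Fin r, ∑ t : ZMod n, e n a (t * X j.succ 0) := by
            rw [Finset.prod_univ_sum]
            rw [Fintype.piFinset_univ]
          rw [h2, Finset.prod_congr rfl (fun j _ => ortho n a ha (X j.succ 0)),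
            prod_ite_zero]
        · simp [hp]
    _ = ((n:ℂ)^r) * ∑ X : Matrix (Fin (r+1)) (Fin (r+1)) (ZMod n),
          (if p X.det ∧ ∀ j : Fin r, X j.succ 0 = 0 then e n a X.trace else 0) := by
        rw [Finset.mul_sum]
        refine Finset.sum_congr rfl (fun X _ => ?_)
        by_cases hp : p X.det <;> by_cases hz : ∀ j : Fin r, X j.succ 0 = 0 <;>
          simp [hp, hz, mul_comm]

lemma unblk_eq {r : ℕ} (X : Matrix (Fin (r+1)) (Fin (r+1)) (ZMod n))
    (hz : ∀ j : Fin r, X j.succ 0 = 0) :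
    blk (X 0 0) (fun j => X 0 j.succ) (fun i j => X i.succ j.succ) = X := by
  ext i j
  rcases Fin.eq_zero_or_eq_succ i with rfl | ⟨i', rfl⟩ <;>
    rcases Fin.eq_zero_or_eq_succ j with rfl | ⟨j', rfl⟩
  · exact blk_zero_zero _ _ _
  · exact blk_zero_succ _ _ _ _
  · exact (blk_succ_zero _ _ _ _).trans (hz i').symm
  · exact blk_succ_succ _ _ _ _ _

lemma L3 {r : ℕ} :
    (∑ X : Matrix (Fin (r+1)) (Fin (r+1)) (ZMod n),
        if p X.det ∧ ∀ j : Fin r, X j.succ 0 = 0 then e n a X.trace else 0)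
      = ∑ t : ZMod n × (Fin r → ZMod n) × Matrix (Fin r) (Fin r) (ZMod n),
          if p (t.1 * t.2.2.det) then e n a t.1 * e n a t.2.2.trace else 0 := by
  rw [← Finset.sum_filter, ← Finset.sum_filter]
  refine (Finset.sum_nbij'
    (i := fun t : ZMod n × (Fin r → ZMod n) × Matrix (Fin r) (Fin r) (ZMod n) =>
        blk t.1 t.2.1 t.2.2)
    (j := fun X => (X 0 0, fun j => X 0 j.succ, fun i j => X i.succ j.succ))
    ?_ ?_ ?_ ?_ ?_).symm
  · intro t ht
    rw [Finset.mem_filter] at ht ⊢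
    refine ⟨Finset.mem_univ _, ?_, fun j => blk_succ_zero _ _ _ _⟩
    rw [blk_det]
    exact ht.2
  · intro X hX
    rw [Finset.mem_filter] at hX ⊢
    refine ⟨Finset.mem_univ _, ?_⟩
    obtain ⟨-, hp, hz⟩ := hX
    have h := unblk_eq n X hz
    show p (X 0 0 * Matrix.det (fun (i j : Fin r) => X i.succ j.succ))
    rw [← blk_det (X 0 0) (fun j => X 0 j.succ) (fun i j => X i.succ j.succ), h]
    exact hp
  · intro t ht
    ext <;> simp
  · intro X hX
    rw [Finset.mem_filter] at hX
    exact unblk_eq n X hX.2.2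
  · intro t ht
    rw [blk_trace, e_add]

lemma L4 {r : ℕ} :
    (∑ z : Fin (r+1) → ZMod n, if p (∏ i, z i) then e n a (∑ i, z i) else 0)
      = ∑ t : ZMod n × (Fin r → ZMod n),
          if p (t.1 * ∏ i, t.2 i) then e n a t.1 * e n a (∑ i, t.2 i) else 0 := by
  refine (Fintype.sum_equiv (Fin.consEquiv (fun _ => ZMod n)) _ _ (fun t => ?_)).symm
  obtain ⟨x, y⟩ := t
  have h1 : ∏ i, (Fin.consEquiv (fun _ => ZMod n)) (x, y) i = x * ∏ i, y i := by
    rw [Fin.prod_univ_succ]; simp [Fin.consEquiv]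
  have h2 : e n a (∑ i, (Fin.consEquiv (fun _ => ZMod n)) (x, y) i)
      = e n a x * e n a (∑ i, y i) := by
    rw [Fin.sum_univ_succ, e_add]; simp [Fin.consEquiv]
  rw [h1, h2]

lemma exp_lemma (r : ℕ) : r + r * (r - 1) / 2 = (r + 1) * (r + 1 - 1) / 2 := by
  cases r with
  | zero => rfl
  | succ m =>
    simp only [Nat.add_sub_cancel]
    have h1 : (m + 1) * m % 2 = 0 := by
      rcases Nat.even_or_odd m with ⟨k, hk⟩ | ⟨k, hk⟩ <;> subst hk
      · have : (k + k + 1) * (k + k) = 2 * ((k + k + 1) * k) := by ring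
        omega
      · have : (2 * k + 1 + 1) * (2 * k + 1) = 2 * ((k + 1) * (2 * k + 1)) := by ring
        omega
    have h2 : (m + 1 + 1) * (m + 1) = (m + 1) * m + 2 * (m + 1) := by ring
    omega

lemma main_lemma (ha : Int.gcd a n = 1) : ∀ (r : ℕ) (p : ZMod n → Prop) [DecidablePred p],
    (∑ X : Matrix (Fin r) (Fin r) (ZMod n), if p X.det then e n a X.trace else 0)
      = (n : ℂ) ^ (r * (r - 1) / 2) *
          ∑ y : Fin r → ZMod n, if p (∏ i, y i) then e n a (∑ i, y i) else 0 := by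
  intro r
  induction r with
  | zero =>
    intro p _
    simp [Matrix.det_fin_zero, Matrix.trace, e_zero]
    rw [show Fintype.card (Matrix (Fin 0) (Fin 0) (ZMod n)) = 1 from
      Fintype.card_eq_one_iff.2 ⟨0, fun X => Matrix.ext (fun i _ => i.elim0)⟩, Nat.cast_one]
  | succ r ih =>
    intro p _
    rw [L2 n a ha, L3 n a, L4 n a]
    simp only [Fintype.sum_prod_type]
    have step : ∀ x : ZMod n,
        (∑ w : Fin r → ZMod n, ∑ B : Matrix (Fin r) (Fin r) (ZMod n),
            if p (x * B.det) then e n a x * e n a B.trace else 0)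
          = (n : ℂ) ^ r * ((n : ℂ) ^ (r * (r - 1) / 2) *
              ∑ y : Fin r → ZMod n, if p (x * ∏ i, y i) then e n a x * e n a (∑ i, y i) else 0) := by
      intro x
      have inner : (∑ B : Matrix (Fin r) (Fin r) (ZMod n),
          if p (x * B.det) then e n a x * e n a B.trace else 0)
            = (n : ℂ) ^ (r * (r - 1) / 2) *
              ∑ y : Fin r → ZMod n, if p (x * ∏ i, y i) then e n a x * e n a (∑ i, y i) else 0 := by
        have h1 : (∑ B : Matrix (Fin r) (Fin r) (ZMod n),
            if p (x * B.det) then e n a x * e n a B.trace else 0)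
              = e n a x * ∑ B : Matrix (Fin r) (Fin r) (ZMod n),
                  if p (x * B.det) then e n a B.trace else 0 := by
          rw [Finset.mul_sum]
          exact Finset.sum_congr rfl (fun B _ => by by_cases hp : p (x * B.det) <;> simp [hp])
        have h2 : (∑ y : Fin r → ZMod n,
            if p (x * ∏ i, y i) then e n a x * e n a (∑ i, y i) else 0)
              = e n a x * ∑ y : Fin r → ZMod n,
                  if p (x * ∏ i, y i) then e n a (∑ i, y i) else 0 := by
          rw [Finset.mul_sum]
          exact Finset.sum_congr rfl (fun y _ => by by_cases hp : p (x * ∏ i, y i) <;> simp [hp])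
        rw [h1, h2, ih (fun c => p (x * c))]
        ring
      rw [Finset.sum_const, Finset.card_univ, nsmul_eq_mul, inner, Fintype.card_fun]
      simp [ZMod.card]
    rw [Finset.sum_congr rfl (fun x _ => step x), ← Finset.mul_sum, ← Finset.mul_sum]
    rw [← mul_assoc, ← pow_add, exp_lemma r]

end Main

end GSL

/-- If `λ(x) = exp(2πi a x/n)` has order `n` (i.e. `gcd(a,n)=1`), then
`G(SL_r(ℤ/nℤ), λ) = n^{r(r-1)/2} · K_r(ℤ/nℤ, λ)`, where
`K_r(ℤ/nℤ, λ) = ∑_{x₁⋯x_r = 1} λ(x₁ + ⋯ + x_r)` is the hyper-Kloosterman sum. -/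
theorem gauss_sum_SL_primitive (n r : ℕ) [NeZero n] (hr : 1 ≤ r) (a : ℤ)
    (ha : Int.gcd a n = 1) :
    (∑ X : Matrix.SpecialLinearGroup (Fin r) (ZMod n),
        addChar n a (X.val.trace).val) =
      (n : ℂ) ^ (r * (r - 1) / 2) *
        ∑ x ∈ Finset.univ.filter (fun x : Fin r → ZMod n => ∏ i, x i = 1),
          addChar n a (∑ i, x i).val := by
  have key := GSL.main_lemma n a ha r (fun c => c = 1)
  have h1 : (∑ X : Matrix.SpecialLinearGroup (Fin r) (ZMod n),
        addChar n a (X.val.trace).val)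
      = ∑ X : Matrix (Fin r) (Fin r) (ZMod n),
          if X.det = 1 then GSL.e n a X.trace else 0 := by
    rw [← Finset.sum_filter]
    refine (Finset.sum_bij
      (fun (A : Matrix (Fin r) (Fin r) (ZMod n)) hA =>
        (⟨A, (Finset.mem_filter.mp hA).2⟩ : Matrix.SpecialLinearGroup (Fin r) (ZMod n)))
      ?_ ?_ ?_ ?_).symm
    · intro A hA; exact Finset.mem_univ _
    · intro A₁ h₁ A₂ h₂ hEq
      exact congrArg Subtype.val hEq
    · intro X _
      refine ⟨X.val, Finset.mem_filter.mpr ⟨Finset.mem_univ _, X.2⟩, rfl⟩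
    · intro A hA; rfl
  have h2 : (∑ x ∈ Finset.univ.filter (fun x : Fin r → ZMod n => ∏ i, x i = 1),
        addChar n a (∑ i, x i).val)
      = ∑ y : Fin r → ZMod n, if (∏ i, y i) = 1 then GSL.e n a (∑ i, y i) else 0 :=
    Finset.sum_filter _ _
  rw [h1, h2]
  exact key
end
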